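/- Let λ̄ > 0, d ≥ 2, and for each integer k ≥ 1 let σ_k = k(k+d−2) and d_k := 1 − 1/(σ_k − λ̃) > 0 for a fixed λ̃ < 0. Suppose p_k: [0,1] → ℝ solves −(1/r^{d-1})(r^{d-1} p_k')' + (σ_k/r² − λ̄) p_k = 0 on (0,1) with p_k'(1) + d_k p_k(1) = c_k, where the boundary data c_k are uniformly bounded in k. If moreover λ̄ is bounded above by a constant Λ, then there exists C > 0 (depending only on d, Λ, sup_k |c_k|, and λ̃) such that |p_k(r)| ≤ C for all r ∈ (0,1) and all k large enough; in particular sup_k sup_{(0,1)} |p_k| < ∞. -/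

import Mathlib

open Set

noncomputable section

/-- σ_k = k(k + d − 2), the k-th Laplace–Beltrami eigenvalue of 𝕊^{d-1}. -/
def sigmaLB (d k : ℕ) : ℝ := (k : ℝ) * ((k : ℝ) + (d : ℝ) - 2)

open Filter in
lemma key (e : ℕ) (lamb Lam M σ δk ck : ℝ)
    (hlamb : 0 < lamb) (hLam : lamb ≤ Lam) (hM : 0 ≤ M) (hck : |ck| ≤ M)
    (hσ : 2*((e:ℝ)+2) + Lam + 1 ≤ σ)
    (hδ : 1/2 ≤ δk)
    (q : ℝ → ℝ)
    (hcont : ContinuousOn q (Icc 0 1))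
    (hsm : ContDiffOn ℝ 2 q (Ioo 0 1))
    (hode : ∀ r ∈ Ioo (0:ℝ) 1,
      deriv (fun s => s^(e+1) * deriv q s) r = r^(e+1) * ((σ/r^2 - lamb) * q r))
    (hbc : deriv q 1 + δk * q 1 = ck) :
    ∀ r ∈ Ioo (0:ℝ) 1, 0 ≤ (2*M+1)*r^2 + q r := by
  obtain ⟨C, hCdef⟩ : ∃ C : ℝ, C = 2*M+1 := ⟨_, rfl⟩
  rw [← hCdef]
  have hC : 0 < C := by rw [hCdef]; linarith
  have hqd : ∀ r ∈ Ioo (0:ℝ) 1, DifferentiableAt ℝ q r := fun r hr =>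
    (hsm.differentiableOn (by norm_num)).differentiableAt (isOpen_Ioo.mem_nhds hr)
  have hdq : ∀ r ∈ Ioo (0:ℝ) 1, DifferentiableAt ℝ (deriv q) r := fun r hr =>
    ((hsm.deriv_of_isOpen (m := 1) isOpen_Ioo (by norm_num)).differentiableOn one_ne_zero).differentiableAt
      (isOpen_Ioo.mem_nhds hr)
  intro rh hrh
  have hrh0 := hrh.1
  have hrh1 := hrh.2
  have hrhne : rh ≠ 0 := ne_of_gt hrh0
  suffices H : ∀ ε : ℝ, 0 < ε → ε ≤ 1 → 0 ≤ C*rh^2 + ε*rh⁻¹ + q rh by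
    by_contra hneg
    push_neg at hneg
    have ht : C*rh^2 + q rh < 0 := hneg
    have hε0 : 0 < min 1 (-(C*rh^2 + q rh)*rh/2) :=
      lt_min one_pos (div_pos (mul_pos (by linarith) hrh0) two_pos)
    have h1 := H _ hε0 (min_le_left _ _)
    have h2 : (min 1 (-(C*rh^2 + q rh)*rh/2)) * rh⁻¹ ≤ (-(C*rh^2 + q rh)*rh/2) * rh⁻¹ :=
      mul_le_mul_of_nonneg_right (min_le_right _ _) (by positivity)
    have h3 : (-(C*rh^2 + q rh)*rh/2) * rh⁻¹ = -(C*rh^2 + q rh)/2 := by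
      field_simp
    rw [h3] at h2
    linarith
  intro ε hε hε1
  obtain ⟨w, hwdef⟩ : ∃ w : ℝ → ℝ, w = fun s => C*s^2 + ε*s⁻¹ + q s := ⟨_, rfl⟩
  obtain ⟨B, hB⟩ := isCompact_Icc.exists_bound_of_continuousOn hcont
  have hB' : ∀ x ∈ Icc (0:ℝ) 1, |q x| ≤ B := by simpa [Real.norm_eq_abs] using hB
  have hB0 : 0 ≤ B := (abs_nonneg _).trans (hB' 0 ⟨le_refl 0, zero_le_one⟩)
  obtain ⟨δ, hδdef⟩ : ∃ δ : ℝ, δ = min (ε/(2*(B+1))) (rh/2) := ⟨_, rfl⟩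
  have hδp : 0 < δ := hδdef ▸ lt_min (by positivity) (by linarith)
  have hδr : δ < rh := hδdef ▸ (min_le_right _ _).trans_lt (by linarith)
  have hδ1 : δ < 1 := hδr.trans hrh1
  -- w is positive on (0, δ]
  have hwpos : ∀ r ∈ Ioc (0:ℝ) δ, 0 < w r := by
    intro r hr
    have hr0 := hr.1
    have hrδ : r ≤ ε/(2*(B+1)) := hr.2.trans (hδdef ▸ min_le_left _ _)
    have h2 : 2*(B+1) ≤ ε/r := by
      rw [le_div_iff₀ hr0]
      calc 2*(B+1)*r ≤ 2*(B+1)*(ε/(2*(B+1))) := by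
            exact mul_le_mul_of_nonneg_left hrδ (by positivity)
        _ = ε := by field_simp
    have h3 : -B ≤ q r := neg_le_of_abs_le (hB' r ⟨hr0.le, hr.2.trans hδ1.le⟩)
    have h4 : 0 ≤ C*r^2 := by positivity
    have h5 : ε/r = ε*r⁻¹ := div_eq_mul_inv ε r
    simp only [hwdef]
    rw [← h5]
    linarith
  have hwc : ContinuousOn w (Ioc 0 1) := by
    rw [hwdef]
    apply ContinuousOn.add
    apply ContinuousOn.add
    · exact (continuous_const.mul (continuous_pow 2)).continuousOn
    · exact continuousOn_const.mul (continuousOn_id.inv₀ fun x hx => ne_of_gt hx.1)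
    · exact hcont.mono Ioc_subset_Icc_self
  have hw' : ∀ r ∈ Ioo (0:ℝ) 1, HasDerivAt w (2*C*r - ε*(r^2)⁻¹ + deriv q r) r := by
    intro r hr
    rw [hwdef]
    have h1 := (hasDerivAt_pow 2 r).const_mul C
    have h2 := (hasDerivAt_inv (ne_of_gt hr.1)).const_mul ε
    have h3 := (hqd r hr).hasDerivAt
    have h := (h1.add h2).add h3
    refine h.congr_deriv ?_
    push_cast
    ring
  obtain ⟨G, hGdef⟩ : ∃ G : ℝ → ℝ,
    G = fun s => 2*C*s^(e+2) - ε*(s^(e+1)/s^2) + s^(e+1)*deriv q s := ⟨_, rfl⟩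
  have hGW : ∀ r : ℝ, r ≠ 0 → G r = r^(e+1) * (2*C*r - ε*(r^2)⁻¹ + deriv q r) := by
    intro r hr0
    simp only [hGdef]
    field_simp
    ring
  have hG' : ∀ r ∈ Ioo (0:ℝ) 1, HasDerivAt G
      (2*C*(((e:ℝ)+2)*r^(e+1)) - ε*((((e:ℝ)+1)*r^e*r^2 - r^(e+1)*(2*r))/(r^2)^2)
        + r^(e+1)*((σ/r^2 - lamb)*q r)) r := by
    intro r hr
    have h1 : HasDerivAt (fun s : ℝ => 2*C*s^(e+2)) (2*C*(((e:ℝ)+2)*r^(e+1))) r := by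
      have h := (hasDerivAt_pow (e+2) r).const_mul (2*C)
      rw [show e+2-1 = e+1 from by omega] at h
      refine h.congr_deriv ?_
      push_cast
      ring
    have h2 : HasDerivAt (fun s : ℝ => ε*(s^(e+1)/s^2))
        (ε*((((e:ℝ)+1)*r^e*r^2 - r^(e+1)*(2*r))/(r^2)^2)) r := by
      have h := ((hasDerivAt_pow (e+1) r).div (hasDerivAt_pow 2 r)
        (pow_ne_zero 2 (ne_of_gt hr.1))).const_mul ε
      rw [show e+1-1 = e from by omega] at h
      refine h.congr_deriv ?_
      push_cast
      ring
    have hd3 : DifferentiableAt ℝ (fun s : ℝ => s^(e+1) * deriv q s) r :=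
      (differentiableAt_pow (e+1)).mul (hdq r hr)
    have h3 : HasDerivAt (fun s : ℝ => s^(e+1) * deriv q s)
        (r^(e+1)*((σ/r^2 - lamb)*q r)) r := by
      have h := hd3.hasDerivAt
      rwa [hode r hr] at h
    rw [hGdef]
    exact (h1.sub h2).add h3
  -- derivative of G is negative where w < 0
  have hgneg : ∀ r ∈ Ioo (0:ℝ) 1, w r < 0 →
      (2*C*(((e:ℝ)+2)*r^(e+1)) - ε*((((e:ℝ)+1)*r^e*r^2 - r^(e+1)*(2*r))/(r^2)^2)
        + r^(e+1)*((σ/r^2 - lamb)*q r)) < 0 := by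
    intro r hr hwr
    have hr0 := hr.1
    have hr1 := hr.2
    have hqr : q r < -(C*r^2) - ε*r⁻¹ := by
      simp only [hwdef] at hwr
      linarith
    have hq2 : q r * r < -(C*r^3) - ε := by
      have h := mul_lt_mul_of_pos_right hqr hr0
      calc q r * r < (-(C*r^2) - ε*r⁻¹)*r := h
        _ = -(C*r^3) - ε := by
            have hrne : r ≠ 0 := ne_of_gt hr0
            field_simp
    have he0 : (0:ℝ) ≤ (e:ℝ) := Nat.cast_nonneg e
    have hr2 : r^2 ≤ 1 := by nlinarith [sq_nonneg (1-r)]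
    have hLr : lamb*r^2 ≤ Lam := by nlinarith [mul_le_mul_of_nonneg_left hr2 hlamb.le]
    have hu : 2*((e:ℝ)+2)+1 ≤ σ - lamb*r^2 := by linarith
    have hupos : 0 < σ - lamb*r^2 := by linarith
    have hmul := mul_lt_mul_of_pos_left hq2 hupos
    have hfac : (2*C*(((e:ℝ)+2)*r^(e+1)) - ε*((((e:ℝ)+1)*r^e*r^2 - r^(e+1)*(2*r))/(r^2)^2)
        + r^(e+1)*((σ/r^2 - lamb)*q r))
        = r^e/(r^2) * (2*C*((e:ℝ)+2)*r^3 - ε*((e:ℝ)-1) + (σ - lamb*r^2)*(q r * r)) := by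
      have hrne : r ≠ 0 := ne_of_gt hr0
      field_simp
      ring
    rw [hfac]
    apply mul_neg_of_pos_of_neg (by positivity)
    have hXP : (2*((e:ℝ)+2)+1) * (C*r^3) ≤ (σ - lamb*r^2) * (C*r^3) :=
      mul_le_mul_of_nonneg_right hu (by positivity)
    have hXe : (2*((e:ℝ)+2)+1) * ε ≤ (σ - lamb*r^2) * ε :=
      mul_le_mul_of_nonneg_right hu hε.le
    linarith [hmul, hXP, hXe, mul_pos hC (pow_pos hr0 3), mul_nonneg he0 hε.le]
  -- boundary contradiction
  have bdry : ∀ a : ℝ, 0 < a → a < 1 → (∀ x ∈ Icc a 1, w 1 ≤ w x) → w 1 < 0 → False := by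
    intro a ha ha1 hminB hw1
    have hw1' : C + ε + q 1 < 0 := by
      have : w 1 = C + ε + q 1 := by simp [hwdef]
      linarith
    have hq1 : q 1 < -C - ε := by linarith
    by_cases hdq1 : DifferentiableAt ℝ q 1
    · have hW1 : HasDerivAt w (2*C - ε + deriv q 1) 1 := by
        rw [hwdef]
        have h1 := (hasDerivAt_pow 2 (1:ℝ)).const_mul C
        have h2 := (hasDerivAt_inv (one_ne_zero : (1:ℝ) ≠ 0)).const_mul ε
        have h3 := hdq1.hasDerivAt
        have h := (h1.add h2).add h3
        refine h.congr_deriv ?_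
        norm_num
        ring
      have hslope := hasDerivAt_iff_tendsto_slope.mp hW1
      have hmono : nhdsWithin (1:ℝ) (Iio 1) ≤ nhdsWithin (1:ℝ) {(1:ℝ)}ᶜ :=
        nhdsWithin_mono _ (fun x hx => ne_of_lt hx)
      have hev : ∀ᶠ x in nhdsWithin (1:ℝ) (Iio 1), slope w 1 x ≤ 0 := by
        filter_upwards [Ioo_mem_nhdsLT_of_mem (⟨ha1, le_refl (1:ℝ)⟩ : (1:ℝ) ∈ Ioc a 1)]
          with x hx
        have h1 : 0 ≤ w x - w 1 := sub_nonneg.2 (hminB x ⟨hx.1.le, hx.2.le⟩)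
        have h2 : x - 1 ≤ 0 := by linarith [hx.2]
        rw [slope_def_field]
        exact div_nonpos_of_nonneg_of_nonpos h1 h2
      have hL : 2*C - ε + deriv q 1 ≤ 0 := le_of_tendsto (hslope.mono_left hmono) hev
      have hδq : δk * q 1 < 0 := mul_neg_of_pos_of_neg (by linarith) (by linarith)
      have habs := abs_le.1 hck
      simp only [hCdef] at hL hq1
      linarith [hbc, habs.1, hδq]
    · have hd0 : deriv q 1 = 0 := deriv_zero_of_not_differentiableAt hdq1
      have hbc' : δk * q 1 = ck := by rw [hd0, zero_add] at hbc; exact hbc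
      have habs := abs_le.1 hck
      have hq1neg : q 1 < 0 := by linarith
      have hp : 0 ≤ (δk - 1/2) * (-q 1) :=
        mul_nonneg (by linarith) (by linarith)
      simp only [hCdef] at hq1
      linarith [habs.1, hbc', hp, hq1, hε]
  -- minimum over [δ, 1]
  obtain ⟨rs, hrsmem, hrsmin⟩ := isCompact_Icc.exists_isMinOn (nonempty_Icc.2 hδ1.le)
    (hwc.mono (fun x hx => ⟨lt_of_lt_of_le hδp hx.1, hx.2⟩))
  have hrsmin' : ∀ x ∈ Icc δ 1, w rs ≤ w x := fun x hx => hrsmin hx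
  rcases le_or_gt 0 (w rs) with hpos | hneg
  · have := hrsmin' rh ⟨hδr.le, hrh1.le⟩
    have : 0 ≤ w rh := le_trans hpos this
    simpa [hwdef] using this
  exfalso
  rcases eq_or_lt_of_le hrsmem.2 with hrs1 | hrs1
  · -- rs = 1
    apply bdry δ hδp hδ1 _ (hrs1 ▸ hneg)
    intro x hx
    rw [← hrs1]
    exact hrsmin' x hx
  -- rs < 1, interior minimum
  have hrsδ : δ < rs := by
    rcases eq_or_lt_of_le hrsmem.1 with h | h
    · exfalso
      have := hwpos rs ⟨h ▸ hδp, h.ge⟩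
      linarith
    · exact h
  have hrsIoo : rs ∈ Ioo (0:ℝ) 1 := ⟨lt_trans hδp hrsδ, hrs1⟩
  have hlocal : IsLocalMin w rs := hrsmin.isLocalMin (Icc_mem_nhds hrsδ hrs1)
  have hW0 : 2*C*rs - ε*(rs^2)⁻¹ + deriv q rs = 0 := by
    rw [← (hw' rs hrsIoo).deriv]
    exact hlocal.deriv_eq_zero
  have hGa : G rs = 0 := by rw [hGW rs (ne_of_gt hrsIoo.1), hW0, mul_zero]
  have CL : ∀ b, rs < b → b ≤ 1 → (∀ x ∈ Ico rs b, w x < 0) → StrictAntiOn w (Icc rs b) := by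
    intro b hb hb1 hneg'
    have hsub : Ico rs b ⊆ Ioo (0:ℝ) 1 := fun x hx =>
      ⟨lt_of_lt_of_le hrsIoo.1 hx.1, lt_of_lt_of_le hx.2 hb1⟩
    have hGanti : StrictAntiOn G (Ico rs b) := by
      apply strictAntiOn_of_deriv_neg (convex_Ico _ _)
      · exact fun x hx => ((hG' x (hsub hx)).differentiableAt.continuousAt).continuousWithinAt
      · intro x hx
        rw [interior_Ico] at hx
        have hxI : x ∈ Ico rs b := ⟨hx.1.le, hx.2⟩
        rw [(hG' x (hsub hxI)).deriv]
        exact hgneg x (hsub hxI) (hneg' x hxI)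
    have hG0 : ∀ x ∈ Ioo rs b, G x < 0 := by
      intro x hx
      have := hGanti ⟨le_refl rs, hb⟩ ⟨hx.1.le, hx.2⟩ hx.1
      rw [hGa] at this
      exact this
    have hwderiv : ∀ x ∈ Ioo rs b, deriv w x < 0 := by
      intro x hx
      have hxI : x ∈ Ioo (0:ℝ) 1 := ⟨lt_trans hrsIoo.1 hx.1, lt_of_lt_of_le hx.2 hb1⟩
      have h := hG0 x hx
      rw [hGW x (ne_of_gt hxI.1)] at h
      have hpow : (0:ℝ) < x^(e+1) := pow_pos hxI.1 _
      rw [(hw' x hxI).deriv]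
      by_contra hc
      push_neg at hc
      exact absurd h (not_lt.2 (mul_nonneg hpow.le hc))
    apply strictAntiOn_of_deriv_neg (convex_Icc _ _)
    · exact hwc.mono (fun x hx => ⟨lt_of_lt_of_le hrsIoo.1 hx.1, le_trans hx.2 hb1⟩)
    · intro x hx
      rw [interior_Icc] at hx
      exact hwderiv x hx
  by_cases hZ : ∃ x ∈ Icc rs 1, 0 ≤ w x
  · set Z : Set ℝ := Icc rs 1 ∩ w ⁻¹' (Ici 0) with hZdef
    have hZcl : IsClosed Z := ContinuousOn.preimage_isClosed_of_isClosed
      (hwc.mono (fun x hx => ⟨lt_of_lt_of_le hrsIoo.1 hx.1, hx.2⟩)) isClosed_Icc isClosed_Ici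
    have hZne : Z.Nonempty := by
      obtain ⟨x, hx1, hx2⟩ := hZ
      exact ⟨x, hx1, hx2⟩
    have hbdd : BddBelow Z := ⟨rs, fun x hx => hx.1.1⟩
    set b := sInf Z with hbdef
    have hbmem : b ∈ Z := hZcl.csInf_mem hZne hbdd
    have hb1 : b ≤ 1 := hbmem.1.2
    have hwb : 0 ≤ w b := hbmem.2
    have hbgt : rs < b := by
      rcases eq_or_lt_of_le hbmem.1.1 with h | h
      · exfalso; rw [← h] at hwb; linarith
      · exact h
    have hbefore : ∀ x ∈ Ico rs b, w x < 0 := by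
      intro x hx
      by_contra hc
      push_neg at hc
      have hxZ : x ∈ Z := ⟨⟨hx.1, hx.2.le.trans hb1⟩, hc⟩
      exact absurd (csInf_le hbdd hxZ) (not_le.2 hx.2)
    have h := CL b hbgt hb1 hbefore ⟨le_refl rs, hbgt.le⟩ ⟨hbgt.le, le_refl b⟩ hbgt
    linarith
  · push_neg at hZ
    have hall : ∀ x ∈ Ico rs 1, w x < 0 := fun x hx => hZ x ⟨hx.1, hx.2.le⟩
    have hSA := CL 1 hrs1 le_rfl hall
    have hw1 : w 1 < 0 := hZ 1 ⟨hrsmem.2, le_refl 1⟩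
    apply bdry rs hrsIoo.1 hrs1 _ hw1
    intro x hx
    rcases eq_or_lt_of_le hx.2 with h | h
    · rw [h]
    · exact (hSA ⟨hx.1, hx.2⟩ ⟨hrsmem.2, le_refl 1⟩ h).le


/-- Uniform bounds for the solutions p_k of
−(1/r^{d-1})(r^{d-1}p_k')' + (σ_k/r² − λ̄)p_k = 0 on (0,1) with Robin boundary data
p_k'(1) + d_k p_k(1) = c_k, d_k = 1 − 1/(σ_k − λ̃) > 0, uniformly bounded c_k, and
0 < λ̄ ≤ Λ: there is C > 0 with |p_k| ≤ C on (0,1) for all large k; in particular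
sup_k sup_{(0,1)} |p_k| < ∞. -/
theorem stmt18 (d : ℕ) (hd : 2 ≤ d) (lamb lamt Lam M : ℝ)
    (hlamb : 0 < lamb) (hlamt : lamt < 0) (hLam : lamb ≤ Lam)
    (p : ℕ → ℝ → ℝ) (c : ℕ → ℝ)
    (hM : ∀ k, 1 ≤ k → |c k| ≤ M)
    (hreg : ∀ k, ContinuousOn (p k) (Icc (0 : ℝ) 1))
    (hreg2 : ∀ k, ContDiffOn ℝ 2 (p k) (Ioo (0 : ℝ) 1))
    (hode : ∀ k, 1 ≤ k → ∀ r ∈ Ioo (0 : ℝ) 1,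
      -(1 / r ^ (d - 1)) * deriv (fun s => s ^ (d - 1) * deriv (p k) s) r
        + (sigmaLB d k / r ^ 2 - lamb) * p k r = 0)
    (hbc : ∀ k, 1 ≤ k →
      deriv (p k) 1 + (1 - 1 / (sigmaLB d k - lamt)) * p k 1 = c k) :
    (∃ C : ℝ, 0 < C ∧ ∃ K : ℕ, ∀ k, K ≤ k → ∀ r ∈ Ioo (0 : ℝ) 1, |p k r| ≤ C) ∧
    (∃ C' : ℝ, ∀ k, 1 ≤ k → ∀ r ∈ Ioo (0 : ℝ) 1, |p k r| ≤ C') := by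
  obtain ⟨e, rfl⟩ : ∃ e, d = e + 2 := ⟨d - 2, by omega⟩
  have hM0 : 0 ≤ M := le_trans (abs_nonneg _) (hM 1 le_rfl)
  have h21 : e + 2 - 1 = e + 1 := by omega
  set K : ℕ := max 1 ⌈2*((e:ℝ)+2) + Lam + 1⌉₊ with hK
  -- bounds on sigma and the Robin coefficient for k ≥ K
  have hKσ : ∀ k : ℕ, K ≤ k →
      2*((e:ℝ)+2) + Lam + 1 ≤ sigmaLB (e+2) k ∧
      1/2 ≤ 1 - 1/(sigmaLB (e+2) k - lamt) := by
    intro k hk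
    have hk1 : 1 ≤ k := le_trans (le_max_left _ _) hk
    have hkR : 2*((e:ℝ)+2) + Lam + 1 ≤ (k:ℝ) := by
      calc 2*((e:ℝ)+2) + Lam + 1 ≤ (⌈2*((e:ℝ)+2) + Lam + 1⌉₊ : ℝ) := Nat.le_ceil _
        _ ≤ (K:ℝ) := Nat.cast_le.2 (by rw [hK]; exact le_max_right _ _)
        _ ≤ (k:ℝ) := Nat.cast_le.2 hk
    have hk1R : (1:ℝ) ≤ (k:ℝ) := by exact_mod_cast hk1
    have he0 : (0:ℝ) ≤ (e:ℝ) := Nat.cast_nonneg e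
    have hσk : (k:ℝ) ≤ sigmaLB (e+2) k := by
      unfold sigmaLB
      push_cast
      nlinarith
    have hσbig : 2*((e:ℝ)+2) + Lam + 1 ≤ sigmaLB (e+2) k := by linarith
    refine ⟨hσbig, ?_⟩
    have hσ2 : (2:ℝ) ≤ sigmaLB (e+2) k - lamt := by linarith
    have h12 : 1/(sigmaLB (e+2) k - lamt) ≤ 1/2 :=
      one_div_le_one_div_of_le (by norm_num) hσ2
    linarith
  -- part A: uniform bound (2M+1) for all k ≥ K
  have partA : ∀ k : ℕ, K ≤ k → ∀ r ∈ Ioo (0:ℝ) 1, |p k r| ≤ 2*M+1 := by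
    intro k hk r hr
    have hk1 : 1 ≤ k := le_trans (le_max_left _ _) hk
    obtain ⟨hσ, hδ⟩ := hKσ k hk
    -- rearranged ODE for p k
    have hodep : ∀ x ∈ Ioo (0:ℝ) 1,
        deriv (fun s => s^(e+1) * deriv (p k) s) x
          = x^(e+1) * ((sigmaLB (e+2) k/x^2 - lamb) * p k x) := by
      intro x hx
      have h := hode k hk1 x hx
      rw [h21] at h
      have hxe : x ^ (e+1) ≠ 0 := pow_ne_zero _ (ne_of_gt hx.1)
      have h' : (1/x^(e+1)) * deriv (fun s => s^(e+1) * deriv (p k) s) x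
          = (sigmaLB (e+2) k/x^2 - lamb) * p k x := by linarith
      calc deriv (fun s => s^(e+1) * deriv (p k) s) x
          = x^(e+1) * ((1/x^(e+1)) * deriv (fun s => s^(e+1) * deriv (p k) s) x) := by
            field_simp
        _ = x^(e+1) * ((sigmaLB (e+2) k/x^2 - lamb) * p k x) := by rw [h']
    have h1 := key e lamb Lam M (sigmaLB (e+2) k) (1 - 1/(sigmaLB (e+2) k - lamt)) (c k)
      hlamb hLam hM0 (hM k hk1) hσ hδ (p k) (hreg k) (hreg2 k) hodep (hbc k hk1)
    have hodeneg : ∀ x ∈ Ioo (0:ℝ) 1,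
        deriv (fun s => s^(e+1) * deriv (fun y => -(p k y)) s) x
          = x^(e+1) * ((sigmaLB (e+2) k/x^2 - lamb) * (-(p k x))) := by
      intro x hx
      have hfe : (fun s : ℝ => s^(e+1) * deriv (fun y => -(p k y)) s)
          = (fun s : ℝ => -(s^(e+1) * deriv (p k) s)) := by
        funext s
        rw [deriv.fun_neg]
        ring
      rw [hfe, deriv.fun_neg, hodep x hx]
      ring
    have hbcneg : deriv (fun y => -(p k y)) 1
        + (1 - 1/(sigmaLB (e+2) k - lamt)) * (-(p k 1)) = -(c k) := by
      rw [deriv.fun_neg]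
      have h := hbc k hk1
      linear_combination -h
    have h2 := key e lamb Lam M (sigmaLB (e+2) k) (1 - 1/(sigmaLB (e+2) k - lamt)) (-(c k))
      hlamb hLam hM0 (by rw [abs_neg]; exact hM k hk1) hσ hδ (fun y => -(p k y))
      ((hreg k).neg) ((hreg2 k).neg) hodeneg hbcneg
    have ha := h1 r hr
    have hb : 0 ≤ (2*M+1)*r^2 - p k r := by simpa using h2 r hr
    have hr2 : r^2 ≤ 1 := by nlinarith [hr.1, hr.2, sq_nonneg (1-r)]
    rw [abs_le]
    constructor <;> nlinarith [ha, hb, hr2, hM0]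
  refine ⟨⟨2*M+1, by linarith, K, partA⟩, ?_⟩
  -- part B: bound for all k ≥ 1
  choose Bf hBf using fun k => isCompact_Icc.exists_bound_of_continuousOn (hreg k)
  refine ⟨(2*M+1) + ∑ j ∈ Finset.range K, |Bf j|, ?_⟩
  intro k hk1 r hr
  have hsum0 : 0 ≤ ∑ j ∈ Finset.range K, |Bf j| :=
    Finset.sum_nonneg (fun j _ => abs_nonneg _)
  rcases le_or_gt K k with h | h
  · have := partA k h r hr
    linarith
  · have hbk : |p k r| ≤ Bf k := by
      have := hBf k r ⟨hr.1.le, hr.2.le⟩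
      simpa [Real.norm_eq_abs] using this
    have hle : |Bf k| ≤ ∑ j ∈ Finset.range K, |Bf j| :=
      Finset.single_le_sum (f := fun j => |Bf j|) (fun j _ => abs_nonneg _)
        (Finset.mem_range.2 h)
    have : Bf k ≤ |Bf k| := le_abs_self _
    linarith
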